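/- arXiv:2207.01051 — 4 statements merged into one kernel-verified Lean document; each statement's English description precedes it below -/
import Mathlib

section
/- Let k ≥ 2, let D be a k-dicritical oriented graph, and let K(D) be the D-knob with base z₁z₂. Then χ⃗(K(D)) = k, and in every k-dicolouring of K(D) the vertices z₁ and z₂ receive different colours. -/
/-!
Basic theory of finite digraphs: a digraph has a finite vertex set and a
finite set of arcs (ordered pairs of distinct vertices).
-/

/-- A finite digraph on a vertex type `V`: a finite vertex set together with a
finite set of arcs, each arc being an ordered pair of distinct vertices. -/
structure Digraph' (V : Type*) where
  verts : Finset V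
  arcs : Finset (V × V)
  wf : ∀ a ∈ arcs, a.1 ∈ verts ∧ a.2 ∈ verts ∧ a.1 ≠ a.2

namespace Digraph'

variable {V : Type*} [DecidableEq V]

/-- The number of vertices of a digraph. -/
def n (D : Digraph' V) : ℕ := D.verts.card

/-- The number of arcs of a digraph. -/
def m (D : Digraph' V) : ℕ := D.arcs.card

/-- The set of consecutive (cyclically) pairs of a list, i.e. the arcs of the
directed cycle running through the list. -/
def cyclicArcs (c : List V) : Finset (V × V) := (c.zip (c.rotate 1)).toFinset

/-- The set of consecutive pairs of a list, i.e. the arcs of the directed path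
running through the list. -/
def pathArcs (p : List V) : Finset (V × V) := (p.zip p.tail).toFinset

/-- The symmetric closure of a set of arcs. -/
def symArcs (s : Finset (V × V)) : Finset (V × V) := s ∪ s.image Prod.swap

/-- The arcs of the bidirected path running through a list (each consecutive
pair is joined by a digon). -/
def pathDigonArcs (p : List V) : Finset (V × V) := symArcs (pathArcs p)

/-- `p` is the list of vertices of a path of odd length (an odd number of edges,
equivalently an even number of vertices) from `a` to `b`. -/
def IsOddBidirPathList (p : List V) (a b : V) : Prop :=
  p.Nodup ∧ Even p.length ∧ p.head? = some a ∧ p.getLast? = some b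

/-- The subdigraph induced by `S` contains no directed cycle.  A directed cycle
is given by a nonempty list of at least two distinct vertices, each one having an
arc towards the (cyclically) next one. -/
def AcyclicOn (D : Digraph' V) (S : Finset V) : Prop :=
  ¬ ∃ c : List V, c.Nodup ∧ 2 ≤ c.length ∧ (∀ v ∈ c, v ∈ S) ∧ cyclicArcs c ⊆ D.arcs

/-- `φ` is a `k`-dicolouring of `D`: every colour class induces an acyclic
subdigraph. -/
def IsDicolouring (D : Digraph' V) (k : ℕ) (φ : V → Fin k) : Prop :=
  ∀ i : Fin k, D.AcyclicOn (D.verts.filter fun v => φ v = i)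

/-- `D` admits a `k`-dicolouring. -/
def Dicolourable (D : Digraph' V) (k : ℕ) : Prop :=
  ∃ φ : V → Fin k, D.IsDicolouring k φ

/-- The dichromatic number of `D`: the least `k` such that `D` is
`k`-dicolourable. -/
noncomputable def dichromatic (D : Digraph' V) : ℕ := sInf {k | D.Dicolourable k}

/-- `H` is a subdigraph of `D`. -/
def IsSubdigraph (H D : Digraph' V) : Prop := H.verts ⊆ D.verts ∧ H.arcs ⊆ D.arcs

/-- `H` is a proper subdigraph of `D`. -/
def IsProperSubdigraph (H D : Digraph' V) : Prop :=
  H.IsSubdigraph D ∧ (H.verts ≠ D.verts ∨ H.arcs ≠ D.arcs)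

/-- `D` is `k`-dicritical: its dichromatic number is `k` and every proper
subdigraph has dichromatic number at most `k - 1`. -/
def Dicritical (k : ℕ) (D : Digraph' V) : Prop :=
  D.dichromatic = k ∧
    ∀ H : Digraph' V, H.IsProperSubdigraph D → H.dichromatic ≤ k - 1

/-- `D` is an oriented graph: it has no digon. -/
def Oriented (D : Digraph' V) : Prop := ∀ a ∈ D.arcs, (a.2, a.1) ∉ D.arcs

/-- There is a digon between `u` and `v` in `D`. -/
def HasDigon (D : Digraph' V) (u v : V) : Prop :=
  (u, v) ∈ D.arcs ∧ (v, u) ∈ D.arcs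

/-- `u` and `v` are neighbours: there is at least one arc between them. -/
def UAdj (D : Digraph' V) (u v : V) : Prop :=
  (u, v) ∈ D.arcs ∨ (v, u) ∈ D.arcs

/-- `M` is a matching of digons of `D` (a matching of the digon graph `B(D)`):
a set of digons of `D`, pairwise sharing no end-vertex. -/
def IsDigonMatching (D : Digraph' V) (M : Finset (V × V)) : Prop :=
  (∀ p ∈ M, D.HasDigon p.1 p.2) ∧
    ∀ p ∈ M, ∀ q ∈ M, p ≠ q → p.1 ≠ q.1 ∧ p.1 ≠ q.2 ∧ p.2 ≠ q.1 ∧ p.2 ≠ q.2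

/-- `π(D)`: the maximum size of a matching of the digon graph `B(D)`. -/
noncomputable def piNum (D : Digraph' V) : ℕ :=
  sSup {k | ∃ M : Finset (V × V), D.IsDigonMatching M ∧ M.card = k}

/-- The potential `ρ(D) = 7 n(D) - 3 m(D) - 2 π(D)`. -/
noncomputable def potential (D : Digraph' V) : ℤ :=
  7 * (D.n : ℤ) - 3 * (D.m : ℤ) - 2 * (D.piNum : ℤ)

/-- The subdigraph of `D` induced by `R`. -/
def induce (D : Digraph' V) (R : Finset V) : Digraph' V where
  verts := D.verts ∩ R
  arcs := D.arcs.filter fun a => a.1 ∈ R ∧ a.2 ∈ R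
  wf := by
    intro a ha
    rw [Finset.mem_filter] at ha
    obtain ⟨h, h1, h2⟩ := ha
    obtain ⟨hv1, hv2, hne⟩ := D.wf a h
    exact ⟨Finset.mem_inter.mpr ⟨hv1, h1⟩, Finset.mem_inter.mpr ⟨hv2, h2⟩, hne⟩

/-- The potential `ρ_D(R)` of a set of vertices `R` in `D`: the potential of the
subdigraph of `D` induced by `R`. -/
noncomputable def potentialOn (D : Digraph' V) (R : Finset V) : ℤ :=
  (D.induce R).potential

/-- The digraph obtained from `D` by deleting the arc `a`. -/
def eraseArc (D : Digraph' V) (a : V × V) : Digraph' V where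
  verts := D.verts
  arcs := D.arcs.erase a
  wf := fun b hb => D.wf b (Finset.mem_of_mem_erase hb)

/-- The digraph obtained from `D` by deleting the vertex `v`. -/
def delVert (D : Digraph' V) (v : V) : Digraph' V where
  verts := D.verts.erase v
  arcs := D.arcs.filter fun a => a.1 ≠ v ∧ a.2 ≠ v
  wf := by
    intro a ha
    rw [Finset.mem_filter] at ha
    obtain ⟨h, h1, h2⟩ := ha
    obtain ⟨hv1, hv2, hne⟩ := D.wf a h
    exact ⟨Finset.mem_erase.mpr ⟨h1, hv1⟩, Finset.mem_erase.mpr ⟨h2, hv2⟩, hne⟩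

/-- The degree of `v` in `D`: the number of arcs incident to `v`. -/
def degree (D : Digraph' V) (v : V) : ℕ :=
  (D.arcs.filter fun a => a.1 = v ∨ a.2 = v).card

/-- `D` is a bidirected odd cycle: obtained from an undirected cycle of odd
length (at least 3) by replacing every edge by a digon. -/
def IsBidirectedOddCycle (D : Digraph' V) : Prop :=
  ∃ c : List V, c.Nodup ∧ 3 ≤ c.length ∧ Odd c.length ∧
    D.verts = c.toFinset ∧ D.arcs = symArcs (cyclicArcs c)

/-- `H` is a bidirected odd cycle with one arc removed. -/
def IsBidirOddCycleMinusArc (H : Digraph' V) : Prop :=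
  ∃ (C : Digraph' V) (e : V × V), C.IsBidirectedOddCycle ∧ e ∈ C.arcs ∧
    H.verts = C.verts ∧ H.arcs = C.arcs.erase e

/-- `D` is an odd 3-wheel with center `c`: a vertex `c` joined to a directed
3-cycle `(x, y, z, x)` by three bidirected paths of odd length, pairwise
disjoint except in `c`. -/
def IsOdd3WheelWithCenter (D : Digraph' V) (c : V) : Prop :=
  ∃ (p₁ p₂ p₃ : List V) (x y z : V),
    IsOddBidirPathList p₁ c x ∧ IsOddBidirPathList p₂ c y ∧ IsOddBidirPathList p₃ c z ∧
    p₁.toFinset ∩ p₂.toFinset = {c} ∧ p₁.toFinset ∩ p₃.toFinset = {c} ∧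
    p₂.toFinset ∩ p₃.toFinset = {c} ∧
    D.verts = p₁.toFinset ∪ p₂.toFinset ∪ p₃.toFinset ∧
    D.arcs = pathDigonArcs p₁ ∪ pathDigonArcs p₂ ∪ pathDigonArcs p₃ ∪
      {(x, y), (y, z), (z, x)}

/-- `D` is an odd 3-wheel. -/
def IsOdd3Wheel (D : Digraph' V) : Prop := ∃ c : V, D.IsOdd3WheelWithCenter c

end Digraph'

/-- `K` is the `D`-knob with base `z₁z₂`: `z₁, z₂` are two new vertices, and `K`
is obtained from `D` by adding the arc `z₁z₂` together with all arcs `z₂u` and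
`uz₁` for `u ∈ V(D)`. -/
def Digraph'.IsKnobOf {V : Type*} [DecidableEq V] (D K : Digraph' V) (z₁ z₂ : V) : Prop :=
  z₁ ∉ D.verts ∧ z₂ ∉ D.verts ∧ z₁ ≠ z₂ ∧
  K.verts = insert z₁ (insert z₂ D.verts) ∧
  K.arcs = D.arcs ∪ {(z₁, z₂)} ∪ D.verts.image (fun u => (z₂, u)) ∪
    D.verts.image (fun u => (u, z₁))


namespace Digraph'
variable {V : Type*} [DecidableEq V]

theorem mem_of_mem_cyclicArcs' {L : List V} {a : V × V} (h : a ∈ cyclicArcs L) :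
    a.1 ∈ L ∧ a.2 ∈ L := by
  rw [cyclicArcs, List.mem_toFinset] at h
  have := List.of_mem_zip h
  exact ⟨this.1, List.mem_rotate.mp this.2⟩

theorem exists_succ_cyclic {L : List V} {v : V} (hv : v ∈ L) :
    ∃ w ∈ L, (v, w) ∈ cyclicArcs L := by
  obtain ⟨i, hi, rfl⟩ := List.mem_iff_getElem.mp hv
  have hilt : i < (L.rotate 1).length := by simpa using hi
  refine ⟨(L.rotate 1)[i]'hilt, List.mem_rotate.mp (List.getElem_mem hilt), ?_⟩
  rw [cyclicArcs, List.mem_toFinset]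
  have hz : i < (L.zip (L.rotate 1)).length := by simp; omega
  have := List.getElem_zip (l := L) (l' := L.rotate 1) (i := i) (h := hz)
  rw [← this]
  exact List.getElem_mem hz

theorem exists_pred_cyclic {L : List V} {w : V} (hw : w ∈ L) :
    ∃ v ∈ L, (v, w) ∈ cyclicArcs L := by
  obtain ⟨i, hi, hgw⟩ := List.mem_iff_getElem.mp ((List.mem_rotate (n := 1)).mpr hw)
  have hilt : i < L.length := by simpa using hi
  refine ⟨(L[i]'hilt), List.getElem_mem hilt, ?_⟩
  rw [cyclicArcs, List.mem_toFinset]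
  have hz : i < (L.zip (L.rotate 1)).length := by simp; omega
  have := List.getElem_zip (l := L) (l' := L.rotate 1) (i := i) (h := hz)
  rw [← hgw, ← this]
  exact List.getElem_mem hz

end Digraph'

/-- Auxiliary colour-removal map `Fin k → Fin (k-1)`, collapsing `c0`. -/
def dropColor (k : ℕ) (c0 : Fin k) (hk : 2 ≤ k) (i : Fin k) : Fin (k - 1) :=
  if h : (i : ℕ) < (c0 : ℕ) then ⟨i, by have := c0.isLt; omega⟩
  else ⟨(i : ℕ) - 1, by have := i.isLt; omega⟩

theorem dropColor_inj (k : ℕ) (c0 : Fin k) (hk : 2 ≤ k) {i j : Fin k}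
    (hi : i ≠ c0) (hj : j ≠ c0) (h : dropColor k c0 hk i = dropColor k c0 hk j) :
    i = j := by
  have hi' : (i : ℕ) ≠ (c0 : ℕ) := fun h' => hi (Fin.ext h')
  have hj' : (j : ℕ) ≠ (c0 : ℕ) := fun h' => hj (Fin.ext h')
  apply Fin.ext
  unfold dropColor at h
  split_ifs at h <;> simp only [Fin.mk.injEq] at h <;> omega

open Digraph' in
/-- If `k ≥ 2`, `D` is a `k`-dicritical oriented graph and
`K(D)` is the `D`-knob with base `z₁z₂`, then `χ⃗(K(D)) = k` and in every
`k`-dicolouring of `K(D)` the vertices `z₁` and `z₂` get different colours. -/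
theorem knob_dichromatic {V : Type*} [DecidableEq V] (k : ℕ) (hk : 2 ≤ k)
    (D K : Digraph' V) (z₁ z₂ : V)
    (hcrit : Digraph'.Dicritical k D) (horient : D.Oriented)
    (hknob : D.IsKnobOf K z₁ z₂) :
    K.dichromatic = k ∧
      ∀ φ : V → Fin k, K.IsDicolouring k φ → φ z₁ ≠ φ z₂ := by
  classical
  obtain ⟨hz1, hz2, hz12, hKv, hKa⟩ := hknob
  obtain ⟨hDchrom, -⟩ := hcrit
  have hsubV : D.verts ⊆ K.verts := by
    intro v hv; rw [hKv]
    exact Finset.mem_insert_of_mem (Finset.mem_insert_of_mem hv)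
  have hsubA : D.arcs ⊆ K.arcs := by
    intro a ha; rw [hKa]
    exact Finset.mem_union_left _ (Finset.mem_union_left _ (Finset.mem_union_left _ ha))
  have hz1K : z₁ ∈ K.verts := by rw [hKv]; exact Finset.mem_insert_self _ _
  have hz2K : z₂ ∈ K.verts := by
    rw [hKv]; exact Finset.mem_insert_of_mem (Finset.mem_insert_self _ _)
  have harc : ∀ a b : V, (a, b) ∈ K.arcs →
      (a, b) ∈ D.arcs ∨ (a = z₁ ∧ b = z₂) ∨ (a = z₂ ∧ b ∈ D.verts) ∨
      (b = z₁ ∧ a ∈ D.verts) := by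
    intro a b h
    rw [hKa] at h
    simp only [Finset.mem_union, Finset.mem_singleton, Finset.mem_image, Prod.mk.injEq,
      Prod.ext_iff] at h
    rcases h with ((h | h) | ⟨u, hu, h1, h2⟩) | ⟨u, hu, h1, h2⟩
    · exact Or.inl h
    · exact Or.inr (Or.inl h)
    · exact Or.inr (Or.inr (Or.inl ⟨h1.symm, h2 ▸ hu⟩))
    · exact Or.inr (Or.inr (Or.inr ⟨h2.symm, h1 ▸ hu⟩))
  -- if a cycle of K contains one of z₁, z₂, it contains both
  have hboth : ∀ L : List V, cyclicArcs L ⊆ K.arcs →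
      ((z₁ ∈ L → z₂ ∈ L) ∧ (z₂ ∈ L → z₁ ∈ L)) := by
    intro L hLa
    constructor
    · intro h1
      obtain ⟨w, hwL, hw⟩ := exists_succ_cyclic h1
      rcases harc _ _ (hLa hw) with h | h | h | h
      · exact absurd (D.wf _ h).1 hz1
      · exact h.2 ▸ hwL
      · exact absurd h.1 hz12
      · exact absurd h.2 hz1
    · intro h2
      obtain ⟨v, hvL, hv⟩ := exists_pred_cyclic h2
      rcases harc _ _ (hLa hv) with h | h | h | h
      · exact absurd (D.wf _ h).2.1 hz2
      · exact h.1 ▸ hvL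
      · exact absurd h.2 hz2
      · exact absurd h.1.symm hz12
  -- D has a k-dicolouring
  have hSDne : {j | D.Dicolourable j}.Nonempty := by
    by_contra h
    rw [Set.not_nonempty_iff_eq_empty] at h
    rw [dichromatic, h, Nat.sInf_empty] at hDchrom
    omega
  have hkD : D.Dicolourable k := by
    have := Nat.sInf_mem hSDne
    rw [show sInf {j | D.Dicolourable j} = D.dichromatic from rfl, hDchrom] at this
    exact this
  obtain ⟨φD, hφD⟩ := hkD
  have hc01 : (⟨0, by omega⟩ : Fin k) ≠ ⟨1, by omega⟩ := by
    simp [Fin.ext_iff]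
  -- K has a k-dicolouring
  have hKk : K.Dicolourable k := by
    refine ⟨fun v => if v = z₁ then ⟨0, by omega⟩ else if v = z₂ then ⟨1, by omega⟩
      else φD v, ?_⟩
    intro i
    rintro ⟨L, hnd, hlen, hmem, hsub⟩
    by_cases h1 : z₁ ∈ L
    · have h2 : z₂ ∈ L := (hboth L hsub).1 h1
      have e1 := (Finset.mem_filter.mp (hmem _ h1)).2
      have e2 := (Finset.mem_filter.mp (hmem _ h2)).2
      simp only [if_pos rfl] at e1
      simp only [if_neg (Ne.symm hz12), if_pos rfl] at e2
      exact hc01 (e1.trans e2.symm)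
    · have h2 : z₂ ∉ L := fun h => h1 ((hboth L hsub).2 h)
      have hDv : ∀ v ∈ L, v ∈ D.verts := by
        intro v hv
        have hKm := (Finset.mem_filter.mp (hmem _ hv)).1
        rw [hKv] at hKm
        rcases Finset.mem_insert.mp hKm with rfl | hKm
        · exact absurd hv h1
        rcases Finset.mem_insert.mp hKm with rfl | hKm
        · exact absurd hv h2
        · exact hKm
      refine hφD i ⟨L, hnd, hlen, ?_, ?_⟩
      · intro v hv
        have hv1 : v ≠ z₁ := fun h => h1 (h ▸ hv)
        have hv2 : v ≠ z₂ := fun h => h2 (h ▸ hv)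
        refine Finset.mem_filter.mpr ⟨hDv v hv, ?_⟩
        have := (Finset.mem_filter.mp (hmem _ hv)).2
        simp only [if_neg hv1, if_neg hv2] at this
        exact this
      · intro a ha
        obtain ⟨x, y⟩ := a
        obtain ⟨ha1, ha2⟩ := mem_of_mem_cyclicArcs' ha
        rcases harc _ _ (hsub ha) with h | h | h | h
        · exact h
        · exact absurd (h.1 ▸ ha1) h1
        · exact absurd (h.1 ▸ ha1) h2
        · exact absurd (h.1 ▸ ha2) h1
  -- restriction of a dicolouring of K to D
  have hrestrict : ∀ j, K.Dicolourable j → D.Dicolourable j := by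
    rintro j ⟨φ, hφ⟩
    refine ⟨φ, ?_⟩
    intro i
    rintro ⟨L, hnd, hlen, hmem, hsub⟩
    refine hφ i ⟨L, hnd, hlen, ?_, fun a ha => hsubA (hsub ha)⟩
    intro v hv
    obtain ⟨hm1, hm2⟩ := Finset.mem_filter.mp (hmem v hv)
    exact Finset.mem_filter.mpr ⟨hsubV hm1, hm2⟩
  have hKub : K.dichromatic ≤ k := Nat.sInf_le hKk
  have hKlb : k ≤ K.dichromatic := by
    refine le_csInf ⟨k, hKk⟩ ?_
    intro j hj
    rw [← hDchrom]
    exact Nat.sInf_le (hrestrict j hj)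
  refine ⟨le_antisymm hKub hKlb, ?_⟩
  intro φ hφ heq
  -- no vertex of D has colour φ z₁
  have hno : ∀ u ∈ D.verts, φ u ≠ φ z₁ := by
    intro u hu hc
    have huz1 : u ≠ z₁ := fun h => hz1 (h ▸ hu)
    have huz2 : u ≠ z₂ := fun h => hz2 (h ▸ hu)
    refine hφ (φ z₁) ⟨[z₁, z₂, u], ?_, by simp, ?_, ?_⟩
    · simp [hz12, Ne.symm huz1, Ne.symm huz2]
    · intro v hv
      simp only [List.mem_cons, List.not_mem_nil, or_false] at hv
      rcases hv with rfl | rfl | rfl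
      · exact Finset.mem_filter.mpr ⟨hz1K, rfl⟩
      · exact Finset.mem_filter.mpr ⟨hz2K, heq.symm⟩
      · exact Finset.mem_filter.mpr ⟨hsubV hu, hc⟩
    · intro a ha
      have hcases : a = (z₁, z₂) ∨ a = (z₂, u) ∨ a = (u, z₁) := by
        simp only [cyclicArcs, List.mem_toFinset] at ha
        have hrot : [z₁, z₂, u].rotate 1 = [z₂, u, z₁] := by
          simp [List.rotate]
        rw [hrot] at ha
        simp only [List.zip, List.zipWith, List.mem_cons, List.not_mem_nil, or_false] at ha
        tauto
      rcases hcases with rfl | rfl | rfl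
      · rw [hKa]
        exact Finset.mem_union_left _ (Finset.mem_union_left _
          (Finset.mem_union_right _ (Finset.mem_singleton_self _)))
      · rw [hKa]
        exact Finset.mem_union_left _ (Finset.mem_union_right _
          (Finset.mem_image_of_mem _ hu))
      · rw [hKa]
        exact Finset.mem_union_right _ (Finset.mem_image_of_mem _ hu)
  -- D would be (k-1)-dicolourable
  have hone : D.Dicolourable (k - 1) := by
    refine ⟨fun v => dropColor k (φ z₁) hk (φ v), ?_⟩
    intro t
    rintro ⟨L, hnd, hlen, hmem, hsub⟩
    have hLne : L ≠ [] := by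
      intro h; rw [h] at hlen; simp at hlen
    obtain ⟨v₀, hv₀⟩ := List.exists_mem_of_ne_nil L hLne
    have hvD : ∀ v ∈ L, v ∈ D.verts := fun v hv => (Finset.mem_filter.mp (hmem v hv)).1
    have hsame : ∀ v ∈ L, φ v = φ v₀ := by
      intro v hv
      have e1 := (Finset.mem_filter.mp (hmem v hv)).2
      have e2 := (Finset.mem_filter.mp (hmem v₀ hv₀)).2
      exact dropColor_inj k (φ z₁) hk (hno v (hvD v hv)) (hno v₀ (hvD v₀ hv₀))
        (e1.trans e2.symm)
    refine hφ (φ v₀) ⟨L, hnd, hlen, ?_, fun a ha => hsubA (hsub ha)⟩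
    intro v hv
    exact Finset.mem_filter.mpr ⟨hsubV (hvD v hv), hsame v hv⟩
  have hle : D.dichromatic ≤ k - 1 := Nat.sInf_le hone
  omega
end

section
/- Let k ≥ 2, let D be a k-dicritical oriented graph, and let K(D) be the D-knob with base z₁z₂. For every arc a of K(D), the digraph K(D) with a removed has a k-dicolouring in which z₁ and z₂ receive the same colour. -/
section AuxLemmas

namespace Digraph'

variable {V : Type*} [DecidableEq V]

lemma cyclicArcs_fst_mem {c : List V} {e : V × V} (h : e ∈ cyclicArcs c) : e.1 ∈ c :=
  (List.of_mem_zip (List.mem_toFinset.mp h)).1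

lemma cyclicArcs_snd_mem {c : List V} {e : V × V} (h : e ∈ cyclicArcs c) : e.2 ∈ c :=
  List.mem_rotate.mp (List.of_mem_zip (List.mem_toFinset.mp h)).2

lemma exists_cyclic_out {l : List V} {v : V} (hv : v ∈ l) :
    ∃ w ∈ l, (v, w) ∈ cyclicArcs l := by
  obtain ⟨i, hi, hvi⟩ := List.mem_iff_getElem.mp hv
  have hlen : (l.rotate 1).length = l.length := List.length_rotate l 1
  have hz : i < (l.zip (l.rotate 1)).length := by
    rw [List.length_zip, hlen]; omega
  have hi' : i < (l.rotate 1).length := by omega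
  refine ⟨(l.rotate 1)[i]'hi', List.mem_rotate.mp (List.getElem_mem hi'), ?_⟩
  rw [cyclicArcs, List.mem_toFinset, ← hvi]
  have hzip : (l.zip (l.rotate 1))[i]'hz = (l[i]'hi, (l.rotate 1)[i]'hi') :=
    List.getElem_zip
  exact hzip ▸ List.getElem_mem hz

lemma exists_cyclic_in {l : List V} {v : V} (hv : v ∈ l) :
    ∃ w ∈ l, (w, v) ∈ cyclicArcs l := by
  have hv' : v ∈ l.rotate 1 := List.mem_rotate.mpr hv
  obtain ⟨i, hi, hvi⟩ := List.mem_iff_getElem.mp hv'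
  have hlen : (l.rotate 1).length = l.length := List.length_rotate l 1
  have hz : i < (l.zip (l.rotate 1)).length := by
    rw [List.length_zip, hlen]; omega
  have hi' : i < l.length := by omega
  refine ⟨l[i]'hi', List.getElem_mem hi', ?_⟩
  rw [cyclicArcs, List.mem_toFinset, ← hvi]
  have hzip : (l.zip (l.rotate 1))[i]'hz = (l[i]'hi', (l.rotate 1)[i]'hi) :=
    List.getElem_zip
  exact hzip ▸ List.getElem_mem hz

lemma acyclicOn_mono {D : Digraph' V} {S T : Finset V} (h : S ⊆ T) (hT : D.AcyclicOn T) :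
    D.AcyclicOn S := by
  rintro ⟨c, h1, h2, h3, h4⟩
  exact hT ⟨c, h1, h2, fun v hv => h (h3 v hv), h4⟩

lemma dicolourable_succ_card (D : Digraph' V) : D.Dicolourable (D.verts.card + 1) := by
  classical
  refine ⟨fun v => if h : v ∈ D.verts then (D.verts.equivFin ⟨v, h⟩).castSucc else 0,
    fun i => ?_⟩
  rintro ⟨c, hnd, hlen, hmem, -⟩
  rcases c with _ | ⟨x, _ | ⟨y, t⟩⟩
  · simp at hlen
  · simp at hlen
  · obtain ⟨hx1, hx2⟩ := Finset.mem_filter.mp (hmem x (by simp))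
    obtain ⟨hy1, hy2⟩ := Finset.mem_filter.mp (hmem y (by simp))
    simp only [dif_pos hx1] at hx2
    simp only [dif_pos hy1] at hy2
    have hxy : x = y := by
      have := (Fin.castSucc_injective _) (hx2.trans hy2.symm)
      have := D.verts.equivFin.injective this
      exact congrArg Subtype.val this
    exact (List.nodup_cons.mp hnd).1 (hxy ▸ (List.mem_cons_self : y ∈ y :: t))

lemma dicolourable_mono {D : Digraph' V} {m m' : ℕ} (h : m ≤ m') (hd : D.Dicolourable m) :
    D.Dicolourable m' := by
  obtain ⟨φ, hφ⟩ := hd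
  refine ⟨fun v => Fin.castLE h (φ v), fun i => ?_⟩
  by_cases hi : i.val < m
  · refine acyclicOn_mono ?_ (hφ ⟨i.val, hi⟩)
    intro v hv
    rw [Finset.mem_filter] at hv ⊢
    refine ⟨hv.1, Fin.ext ?_⟩
    simpa using congrArg Fin.val hv.2
  · rintro ⟨c, hnd, hlen, hmem, -⟩
    obtain ⟨v, hv⟩ := List.exists_mem_of_length_pos (show 0 < c.length by omega)
    obtain ⟨-, h2⟩ := Finset.mem_filter.mp (hmem v hv)
    have h3 := congrArg Fin.val h2
    simp at h3
    have := (φ v).isLt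
    omega

lemma dicolourable_of_le {D : Digraph' V} {m : ℕ} (h : D.dichromatic ≤ m) :
    D.Dicolourable m := by
  have hne : {n | D.Dicolourable n}.Nonempty := ⟨_, D.dicolourable_succ_card⟩
  exact dicolourable_mono h (Nat.sInf_mem hne)

end Digraph'

end AuxLemmas

section KnobLemmas

namespace Digraph'.IsKnobOf

open Digraph'

variable {V : Type*} [DecidableEq V] {D K : Digraph' V} {z₁ z₂ : V}

lemma arc_cases (h : D.IsKnobOf K z₁ z₂) {e : V × V} (he : e ∈ K.arcs) :
    e ∈ D.arcs ∨ e = (z₁, z₂) ∨ (e.1 = z₂ ∧ e.2 ∈ D.verts) ∨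
      (e.2 = z₁ ∧ e.1 ∈ D.verts) := by
  obtain ⟨-, -, -, -, hKa⟩ := h
  rw [hKa] at he
  simp only [Finset.mem_union, Finset.mem_singleton, Finset.mem_image] at he
  rcases he with ((he | he) | ⟨u, hu, hue⟩) | ⟨u, hu, hue⟩
  · exact Or.inl he
  · exact Or.inr (Or.inl he)
  · subst hue; exact Or.inr (Or.inr (Or.inl ⟨rfl, hu⟩))
  · subst hue; exact Or.inr (Or.inr (Or.inr ⟨rfl, hu⟩))

lemma out_z₁ (h : D.IsKnobOf K z₁ z₂) {y : V} (hy : (z₁, y) ∈ K.arcs) : y = z₂ := by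
  rcases h.arc_cases hy with hD | he | ⟨h1, h2⟩ | ⟨h1, h2⟩
  · exact absurd (D.wf _ hD).1 h.1
  · exact congrArg Prod.snd he
  · exact absurd (h1 ▸ rfl : z₁ = z₂) h.2.2.1
  · exact absurd h2 h.1

lemma in_z₂ (h : D.IsKnobOf K z₁ z₂) {x : V} (hx : (x, z₂) ∈ K.arcs) : x = z₁ := by
  rcases h.arc_cases hx with hD | he | ⟨h1, h2⟩ | ⟨h1, h2⟩
  · exact absurd (D.wf _ hD).2.1 h.2.1
  · exact congrArg Prod.fst he
  · exact absurd h2 h.2.1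
  · exact absurd (h1 : z₂ = z₁) (Ne.symm h.2.2.1)

lemma not_z₂z₁ (h : D.IsKnobOf K z₁ z₂) : (z₂, z₁) ∉ K.arcs := by
  intro hc
  rcases h.arc_cases hc with hD | he | ⟨h1, h2⟩ | ⟨h1, h2⟩
  · exact h.2.1 (D.wf _ hD).1
  · exact h.2.2.1 (congrArg Prod.fst he).symm
  · exact h.1 h2
  · exact h.2.1 h2

lemma arc_D (h : D.IsKnobOf K z₁ z₂) {e : V × V} (he : e ∈ K.arcs)
    (h1 : e.1 ∈ D.verts) (h2 : e.2 ∈ D.verts) : e ∈ D.arcs := by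
  rcases h.arc_cases he with hD | hee | ⟨ha, hb⟩ | ⟨ha, hb⟩
  · exact hD
  · rw [hee] at h1; exact absurd h1 h.1
  · rw [ha] at h1; exact absurd h1 h.2.1
  · rw [ha] at h2; exact absurd h2 h.1

/-- Build a `k`-dicolouring of `K - a` from a `(k-1)`-dicolouring of a suitable
subdigraph `H` of `D`, reserving the last colour for the set `Z`. -/
lemma build_colouring {H : Digraph' V} (h : D.IsKnobOf K z₁ z₂) {k : ℕ} (hk : 2 ≤ k)
    {a : V × V} (Z : Finset V) (hz₁Z : z₁ ∈ Z) (hz₂Z : z₂ ∈ Z)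
    (hHv : ∀ v ∈ D.verts, v ∉ Z → v ∈ H.verts)
    (hHa : ∀ e ∈ D.arcs, e ≠ a → e.1 ∉ Z → e.2 ∉ Z → e ∈ H.arcs)
    (hnoZ : ∀ c : List V, c.Nodup → 2 ≤ c.length → (∀ v ∈ c, v ∈ Z) →
        cyclicArcs c ⊆ K.arcs.erase a → False)
    {ψ : V → Fin (k - 1)} (hψ : H.IsDicolouring (k - 1) ψ) :
    ∃ φ : V → Fin k, (K.eraseArc a).IsDicolouring k φ ∧ φ z₁ = φ z₂ := by
  classical
  have hk1 : k - 1 < k := by omega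
  set L : Fin k := ⟨k - 1, hk1⟩ with hLdef
  refine ⟨fun v => if v ∈ Z then L else Fin.castLE (Nat.sub_le k 1) (ψ v),
    fun i => ?_, by simp [hz₁Z, hz₂Z]⟩
  rintro ⟨c, hnd, hlen, hmem, harcs⟩
  by_cases hiL : i = L
  · refine hnoZ c hnd hlen ?_ harcs
    intro v hv
    obtain ⟨-, h2⟩ := Finset.mem_filter.mp (hmem v hv)
    by_contra hvZ
    simp only [if_neg hvZ] at h2
    have := congrArg Fin.val (h2.trans (hiL ▸ rfl : i = L))
    simp [hLdef] at this
    have := (ψ v).isLt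
    omega
  · have hival : i.val < k - 1 := by
      have h1 : i.val ≠ k - 1 := fun hc => hiL (Fin.ext hc)
      have := i.isLt
      omega
    have key : ∀ v ∈ c, v ∈ H.verts ∧ v ∉ Z ∧ v ∈ D.verts ∧ (ψ v).val = i.val := by
      intro v hv
      obtain ⟨h1, h2⟩ := Finset.mem_filter.mp (hmem v hv)
      have hvZ : v ∉ Z := by
        intro hvZ
        simp only [if_pos hvZ] at h2
        exact hiL h2.symm
      simp only [if_neg hvZ] at h2
      have hvK : v ∈ K.verts := h1
      rw [h.2.2.2.1] at hvK
      have hvD : v ∈ D.verts := by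
        rcases Finset.mem_insert.mp hvK with rfl | hvK
        · exact absurd hz₁Z hvZ
        rcases Finset.mem_insert.mp hvK with rfl | hvK
        · exact absurd hz₂Z hvZ
        exact hvK
      refine ⟨hHv v hvD hvZ, hvZ, hvD, ?_⟩
      simpa using congrArg Fin.val h2
    refine hψ ⟨i.val, hival⟩ ⟨c, hnd, hlen, ?_, ?_⟩
    · intro v hv
      obtain ⟨hv1, hv2, hv3, hv4⟩ := key v hv
      exact Finset.mem_filter.mpr ⟨hv1, Fin.ext hv4⟩
    · intro e he
      have heK' : e ∈ K.arcs.erase a := harcs he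
      have heK : e ∈ K.arcs := Finset.mem_of_mem_erase heK'
      have hne : e ≠ a := Finset.ne_of_mem_erase heK'
      obtain ⟨-, hx2, hx3, -⟩ := key e.1 (cyclicArcs_fst_mem he)
      obtain ⟨-, hy2, hy3, -⟩ := key e.2 (cyclicArcs_snd_mem he)
      exact hHa e (h.arc_D heK hx3 hy3) hne hx2 hy2

end Digraph'.IsKnobOf

end KnobLemmas

open Digraph' in
/-- If `k ≥ 2`, `D` is a `k`-dicritical oriented graph and
`K(D)` is the `D`-knob with base `z₁z₂`, then for every arc `a` of `K(D)` the
digraph `K(D)` minus `a` has a `k`-dicolouring in which `z₁` and `z₂` get the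
same colour. -/
theorem knob_minus_arc_dicolouring {V : Type*} [DecidableEq V] (k : ℕ) (hk : 2 ≤ k)
    (D K : Digraph' V) (z₁ z₂ : V)
    (hcrit : Digraph'.Dicritical k D) (horient : D.Oriented)
    (hknob : D.IsKnobOf K z₁ z₂) :
    ∀ a ∈ K.arcs, ∃ φ : V → Fin k,
      (K.eraseArc a).IsDicolouring k φ ∧ φ z₁ = φ z₂ := by
  classical
  intro a ha
  obtain ⟨hz1, hz2, hz12, hKv, hKa⟩ := id hknob
  -- helper for the two vertex-deletion cases
  have hdel : ∀ u ∈ D.verts, (a = (z₂, u) ∨ a = (u, z₁)) →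
      ∃ φ : V → Fin k, (K.eraseArc a).IsDicolouring k φ ∧ φ z₁ = φ z₂ := by
    intro u hu hau
    have hprop : (D.delVert u).IsProperSubdigraph D := by
      refine ⟨⟨Finset.erase_subset _ _, Finset.filter_subset _ _⟩, Or.inl ?_⟩
      intro hc
      have : u ∈ (D.delVert u).verts := hc ▸ hu
      exact (Finset.notMem_erase u D.verts) this
    obtain ⟨ψ, hψ⟩ : (D.delVert u).Dicolourable (k - 1) :=
      Digraph'.dicolourable_of_le (hcrit.2 _ hprop)
    refine hknob.build_colouring hk ({z₁, z₂, u}) (by simp) (by simp) ?_ ?_ ?_ hψ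
    · intro v hv hvZ
      simp only [Finset.mem_insert, Finset.mem_singleton, not_or] at hvZ
      exact Finset.mem_erase.mpr ⟨hvZ.2.2, hv⟩
    · intro e he hne h1 h2
      simp only [Finset.mem_insert, Finset.mem_singleton, not_or] at h1 h2
      exact Finset.mem_filter.mpr ⟨he, h1.2.2, h2.2.2⟩
    · intro c hnd hlen hmemZ harcs
      have huz1 : u ≠ z₁ := fun h => hz1 (h ▸ hu)
      have huz2 : u ≠ z₂ := fun h => hz2 (h ▸ hu)
      have hz₂c : z₂ ∉ c := by
        intro hz₂c
        obtain ⟨w, hwc, hwa⟩ := Digraph'.exists_cyclic_out hz₂c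
        have hwK' := harcs hwa
        have hwK : (z₂, w) ∈ K.arcs := Finset.mem_of_mem_erase hwK'
        have hwz2 : w ≠ z₂ := fun h => (K.wf _ hwK).2.2 (h ▸ rfl)
        have hwu : w = u := by
          have := hmemZ w hwc
          simp only [Finset.mem_insert, Finset.mem_singleton] at this
          rcases this with rfl | rfl | rfl
          · exact absurd hwK hknob.not_z₂z₁
          · exact absurd rfl hwz2
          · rfl
        rw [hwu] at hwK hwK' hwc
        -- arc (z₂, u) present, so a ≠ (z₂, u), hence a = (u, z₁)
        have hane : (z₂, u) ≠ a := Finset.ne_of_mem_erase hwK'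
        rcases hau with rfl | rfl
        · exact hane rfl
        · -- a = (u, z₁); then u ∈ c, look at out-arc of u
          obtain ⟨w', hw'c, hw'a⟩ := Digraph'.exists_cyclic_out hwc
          have hw'K' := harcs hw'a
          have hw'K : (u, w') ∈ K.arcs := Finset.mem_of_mem_erase hw'K'
          have hw'u : w' ≠ u := fun h => (K.wf _ hw'K).2.2 (h ▸ rfl)
          have hw'z2 : w' ≠ z₂ := by
            intro h
            subst h
            exact hz1 (hknob.in_z₂ hw'K ▸ hu)
          have hw'z1 : w' = z₁ := by
            have := hmemZ w' hw'c
            simp only [Finset.mem_insert, Finset.mem_singleton] at this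
            rcases this with rfl | rfl | rfl
            · rfl
            · exact absurd rfl hw'z2
            · exact absurd rfl hw'u
          subst hw'z1
          exact Finset.ne_of_mem_erase hw'K' rfl
      have hz₁c : z₁ ∉ c := by
        intro hz₁c
        obtain ⟨w, hwc, hwa⟩ := Digraph'.exists_cyclic_out hz₁c
        have hwK : (z₁, w) ∈ K.arcs := Finset.mem_of_mem_erase (harcs hwa)
        exact hz₂c (hknob.out_z₁ hwK ▸ hwc)
      obtain ⟨v, hv⟩ := List.exists_mem_of_length_pos (show 0 < c.length by omega)
      have hvu : v = u := by
        have := hmemZ v hv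
        simp only [Finset.mem_insert, Finset.mem_singleton] at this
        rcases this with rfl | rfl | rfl
        · exact absurd hv hz₁c
        · exact absurd hv hz₂c
        · rfl
      rw [hvu] at hv
      obtain ⟨w, hwc, hwa⟩ := Digraph'.exists_cyclic_out hv
      have hwK : (u, w) ∈ K.arcs := Finset.mem_of_mem_erase (harcs hwa)
      have hwu : w ≠ u := fun h => (K.wf _ hwK).2.2 (h ▸ rfl)
      have := hmemZ w hwc
      simp only [Finset.mem_insert, Finset.mem_singleton] at this
      rcases this with rfl | rfl | rfl
      · exact hz₁c hwc
      · exact hz₂c hwc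
      · exact hwu rfl
  rcases hknob.arc_cases ha with haD | haz | ⟨h1, h2⟩ | ⟨h1, h2⟩
  · -- a ∈ D.arcs
    have hprop : (D.eraseArc a).IsProperSubdigraph D := by
      refine ⟨⟨subset_rfl, Finset.erase_subset _ _⟩, Or.inr ?_⟩
      intro hc
      have : a ∈ (D.eraseArc a).arcs := hc ▸ haD
      exact (Finset.notMem_erase a D.arcs) this
    obtain ⟨ψ, hψ⟩ : (D.eraseArc a).Dicolourable (k - 1) :=
      Digraph'.dicolourable_of_le (hcrit.2 _ hprop)
    refine hknob.build_colouring hk ({z₁, z₂}) (by simp) (by simp) ?_ ?_ ?_ hψ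
    · intro v hv _; exact hv
    · intro e he hne _ _
      exact Finset.mem_erase.mpr ⟨hne, he⟩
    · intro c hnd hlen hmemZ harcs
      have hz₂c : z₂ ∉ c := by
        intro hz₂c
        obtain ⟨w, hwc, hwa⟩ := Digraph'.exists_cyclic_out hz₂c
        have hwK : (z₂, w) ∈ K.arcs := Finset.mem_of_mem_erase (harcs hwa)
        have hwz2 : w ≠ z₂ := fun h => (K.wf _ hwK).2.2 (h ▸ rfl)
        have hwz1 : w = z₁ := by
          have := hmemZ w hwc
          simp only [Finset.mem_insert, Finset.mem_singleton] at this
          rcases this with rfl | rfl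
          · rfl
          · exact absurd rfl hwz2
        subst hwz1
        exact hknob.not_z₂z₁ hwK
      obtain ⟨v, hv⟩ := List.exists_mem_of_length_pos (show 0 < c.length by omega)
      have hvz1 : v = z₁ := by
        have := hmemZ v hv
        simp only [Finset.mem_insert, Finset.mem_singleton] at this
        rcases this with rfl | rfl
        · rfl
        · exact absurd hv hz₂c
      subst hvz1
      obtain ⟨w, hwc, hwa⟩ := Digraph'.exists_cyclic_out hv
      have hwK : (v, w) ∈ K.arcs := Finset.mem_of_mem_erase (harcs hwa)
      exact hz₂c (hknob.out_z₁ hwK ▸ hwc)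
  · -- a = (z₁, z₂)
    subst haz
    obtain ⟨ψ, hψ⟩ : D.Dicolourable k := Digraph'.dicolourable_of_le (le_of_eq hcrit.1)
    refine ⟨fun v => if v = z₁ then ψ z₂ else ψ v, fun i => ?_, by simp [Ne.symm hz12]⟩
    rintro ⟨c, hnd, hlen, hmem, harcs⟩
    have hz₁c : z₁ ∉ c := by
      intro hc
      obtain ⟨w, hwc, hwa⟩ := Digraph'.exists_cyclic_out hc
      have hwK' := harcs hwa
      have hw2 : w = z₂ := hknob.out_z₁ (Finset.mem_of_mem_erase hwK')
      subst hw2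
      exact Finset.ne_of_mem_erase hwK' rfl
    have hz₂c : z₂ ∉ c := by
      intro hc
      obtain ⟨w, hwc, hwa⟩ := Digraph'.exists_cyclic_in hc
      have hwK' := harcs hwa
      have hw1 : w = z₁ := hknob.in_z₂ (Finset.mem_of_mem_erase hwK')
      subst hw1
      exact Finset.ne_of_mem_erase hwK' rfl
    have key : ∀ v ∈ c, v ∈ D.verts ∧ ψ v = i := by
      intro v hv
      obtain ⟨h1, h2⟩ := Finset.mem_filter.mp (hmem v hv)
      have hvz1 : v ≠ z₁ := fun h => hz₁c (h ▸ hv)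
      have hvz2 : v ≠ z₂ := fun h => hz₂c (h ▸ hv)
      have hvK : v ∈ K.verts := h1
      rw [hKv] at hvK
      rcases Finset.mem_insert.mp hvK with rfl | hvK
      · exact absurd rfl hvz1
      rcases Finset.mem_insert.mp hvK with rfl | hvK
      · exact absurd rfl hvz2
      simp only [if_neg hvz1] at h2
      exact ⟨hvK, h2⟩
    refine hψ i ⟨c, hnd, hlen, ?_, ?_⟩
    · intro v hv
      exact Finset.mem_filter.mpr (key v hv)
    · intro e he
      have heK : e ∈ K.arcs := Finset.mem_of_mem_erase (harcs he)
      exact hknob.arc_D heK (key e.1 (Digraph'.cyclicArcs_fst_mem he)).1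
        (key e.2 (Digraph'.cyclicArcs_snd_mem he)).1
  · -- a = (z₂, u)
    exact hdel a.2 h2 (Or.inl (by rw [← h1]))
  · -- a = (u, z₁)
    exact hdel a.1 h2 (Or.inr (by rw [← h1]))
end

section
/- Every tree T with n ≥ 2 vertices and f leaves has a matching of size at least (n − f + 1)/2. -/
open SimpleGraph Finset

private lemma lemA {V : Type*} [DecidableEq V] {G : SimpleGraph V} (hac : G.IsAcyclic) {c b y z : V}
    (q : G.Walk c b) (hq : q.IsPath) (hyc : G.Adj y c) (hy : y ∉ q.support)
    (hz : z ∈ q.support) (hyz : G.Adj y z) : z = c := by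
  have ht : (q.takeUntil z hz).IsPath := hq.takeUntil hz
  have hy' : y ∉ (q.takeUntil z hz).support := fun h => hy (q.support_takeUntil_subset hz h)
  have hp1 : (SimpleGraph.Walk.cons hyc (q.takeUntil z hz)).IsPath := ht.cons hy'
  have heq := isAcyclic_iff_path_unique.mp hac ⟨_, hp1⟩ (SimpleGraph.Path.singleton hyz)
  have hlen := congrArg (fun P : G.Path y z => P.1.length) heq
  simp [SimpleGraph.Path.singleton, SimpleGraph.Walk.length_cons] at hlen
  exact hlen.symm

private lemma helper {V : Type*} [Fintype V] [DecidableEq V] (G : SimpleGraph V) [DecidableRel G.Adj]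
    (hac : G.IsAcyclic) (s : Finset V) :
    (∃ x ∈ s, ∃ y ∈ s, G.Adj x y) →
    ∃ M : G.Subgraph, M.IsMatching ∧ M.verts ⊆ (↑s : Set V) ∧
      ((s.card : ℚ) - ((s.filter fun v => (s.filter (G.Adj v)).card ≤ 1).card : ℚ) + 1) / 2
        ≤ (M.edgeSet.ncard : ℚ) := by
  induction s using Finset.strongInduction with
  | _ s IH =>
  intro hedge
  obtain ⟨x, hxs, y, hys, hxy⟩ := hedge
  by_cases hint : ∃ v ∈ s, 2 ≤ (s.filter (G.Adj v)).card
  · -- there is an internal vertex: take a maximal path inside s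
    obtain ⟨v0, hv0s, hv0d⟩ := hint
    set L : Set ℕ :=
      {n | ∃ (a b : V) (p : G.Walk a b), p.IsPath ∧ (∀ x ∈ p.support, x ∈ s) ∧ p.length = n}
      with hLdef
    have h2L : 2 ∈ L := by
      obtain ⟨y1, hy1, z1, hz1, hyz1⟩ := Finset.one_lt_card.mp hv0d
      obtain ⟨hy1s, hady⟩ := Finset.mem_filter.mp hy1
      obtain ⟨hz1s, hadz⟩ := Finset.mem_filter.mp hz1
      refine ⟨y1, z1, SimpleGraph.Walk.cons hady.symm (SimpleGraph.Walk.cons hadz .nil), ?_, ?_, rfl⟩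
      · simp [SimpleGraph.Walk.isPath_def, hady.ne', hadz.ne, hyz1]
      · intro x hx
        simp only [SimpleGraph.Walk.support_cons, SimpleGraph.Walk.support_nil,
          List.mem_cons, List.mem_singleton] at hx
        rcases hx with rfl | rfl | rfl | h
        · exact hy1s
        · exact hv0s
        · exact hz1s
        · simp at h
    have hLbdd : BddAbove L := by
      refine ⟨Fintype.card V, fun n hn => ?_⟩
      obtain ⟨a, b, p, hp, _, hlen⟩ := hn
      exact hlen ▸ hp.length_lt.le
    have hkmem := Nat.sSup_mem ⟨2, h2L⟩ hLbdd
    set k := sSup L with hkdef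
    have hmax : ∀ m ∈ L, m ≤ k := fun m hm => le_csSup hLbdd hm
    have hk2 : 2 ≤ k := hmax 2 h2L
    obtain ⟨a, b, p, hp, hsup, hlen⟩ := hkmem
    cases p with
    | nil => simp at hlen; omega
    | cons h q =>
      rename_i c
      cases q with
      | nil => simp at hlen; omega
      | cons h' r =>
        rename_i d
        -- h : G.Adj a c, h' : G.Adj c d, r : G.Walk d b
        have hp1 : (SimpleGraph.Walk.cons h' r).IsPath ∧ a ∉ (SimpleGraph.Walk.cons h' r).support :=
          (SimpleGraph.Walk.cons_isPath_iff _ _).mp hp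
        obtain ⟨hp1, ha_nmem⟩ := hp1
        have hr : r.IsPath := hp1.of_cons
        have hc_nmem : c ∉ r.support := ((SimpleGraph.Walk.cons_isPath_iff _ _).mp hp1).2
        have has : a ∈ s := hsup a (by simp)
        have hcs : c ∈ s := hsup c (by simp)
        have hds : d ∈ s := hsup d (by simp [SimpleGraph.Walk.support_cons])
        have hlen' : (SimpleGraph.Walk.cons h' r).length + 1 = k := by
          simpa using hlen
        -- K1 : all s-neighbors of a equal c
        have hK1 : ∀ y ∈ s, G.Adj a y → y = c := by
          intro y hy hay
          by_cases hmem : y ∈ (SimpleGraph.Walk.cons h' r).support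
          · exact lemA hac _ hp1 h ha_nmem hmem hay
          · exfalso
            have hynp : y ∉ (SimpleGraph.Walk.cons h (SimpleGraph.Walk.cons h' r)).support := by
              rw [SimpleGraph.Walk.support_cons, List.mem_cons]
              push_neg
              exact ⟨hay.ne', hmem⟩
            have hnewpath : (SimpleGraph.Walk.cons hay.symm
                (SimpleGraph.Walk.cons h (SimpleGraph.Walk.cons h' r))).IsPath :=
              SimpleGraph.Walk.IsPath.cons hp hynp
            have : k + 1 ∈ L := by
              refine ⟨y, b, _, hnewpath, ?_, ?_⟩
              · intro x hx
                rw [SimpleGraph.Walk.support_cons, List.mem_cons] at hx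
                rcases hx with rfl | hx
                · exact hy
                · exact hsup x hx
              · simp only [SimpleGraph.Walk.length_cons] at hlen ⊢
                omega
            have := hmax _ this
            omega
        have hK2 : s.filter (G.Adj a) = {c} := by
          refine Finset.eq_singleton_iff_unique_mem.mpr ⟨Finset.mem_filter.mpr ⟨hcs, h⟩, ?_⟩
          intro y hy
          obtain ⟨hy1, hy2⟩ := Finset.mem_filter.mp hy
          exact hK1 y hy1 hy2
        -- K3 : s-neighbors of c other than d are leaves
        have hK3 : ∀ y ∈ s, G.Adj c y → y ≠ d → (s.filter (G.Adj y)).card ≤ 1 := by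
          intro y hys hcy hyd
          by_contra hc2
          push_neg at hc2
          have hya : y ≠ a := by
            rintro rfl
            rw [hK2] at hc2
            simp at hc2
          by_cases hmem : y ∈ (SimpleGraph.Walk.cons h (SimpleGraph.Walk.cons h' r)).support
          · have h1 : y ∈ (SimpleGraph.Walk.cons h' r).support := by
              rw [SimpleGraph.Walk.support_cons, List.mem_cons] at hmem
              rcases hmem with rfl | hmem
              · exact absurd rfl hya
              · exact hmem
            have h2 : y ∈ r.support := by
              rw [SimpleGraph.Walk.support_cons, List.mem_cons] at h1
              rcases h1 with rfl | h1
              · exact absurd rfl hcy.ne'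
              · exact h1
            exact hyd (lemA hac r hr h' hc_nmem h2 hcy)
          · have hyq : y ∉ (SimpleGraph.Walk.cons h' r).support := by
              intro hh
              exact hmem (by rw [SimpleGraph.Walk.support_cons]; exact List.mem_cons_of_mem _ hh)
            have hT : (SimpleGraph.Walk.cons hcy.symm (SimpleGraph.Walk.cons h' r)).IsPath :=
              SimpleGraph.Walk.IsPath.cons hp1 hyq
            -- find a neighbor z of y in s with z ≠ c
            have hzx : ∃ z ∈ s.filter (G.Adj y), z ≠ c := by
              obtain ⟨z1, hz1, z2, hz2, hz12⟩ := Finset.one_lt_card.mp hc2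
              by_cases h1 : z1 = c
              · exact ⟨z2, hz2, by rintro rfl; exact hz12 h1⟩
              · exact ⟨z1, hz1, h1⟩
            obtain ⟨z, hzf, hzc⟩ := hzx
            obtain ⟨hzs, hyz⟩ := Finset.mem_filter.mp hzf
            by_cases hzt : z ∈ (SimpleGraph.Walk.cons hcy.symm (SimpleGraph.Walk.cons h' r)).support
            · have hz2 : z ∈ (SimpleGraph.Walk.cons h' r).support := by
                rw [SimpleGraph.Walk.support_cons, List.mem_cons] at hzt
                rcases hzt with rfl | hzt
                · exact absurd rfl hyz.ne'
                · exact hzt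
              exact hzc (lemA hac _ hp1 hcy.symm hyq hz2 hyz)
            · have hnewpath : (SimpleGraph.Walk.cons hyz.symm
                  (SimpleGraph.Walk.cons hcy.symm (SimpleGraph.Walk.cons h' r))).IsPath :=
                SimpleGraph.Walk.IsPath.cons hT hzt
              have : k + 1 ∈ L := by
                refine ⟨z, b, _, hnewpath, ?_, ?_⟩
                · intro x hx
                  rw [SimpleGraph.Walk.support_cons, List.mem_cons] at hx
                  rcases hx with rfl | hx
                  · exact hzs
                  · rw [SimpleGraph.Walk.support_cons, List.mem_cons] at hx
                    rcases hx with rfl | hx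
                    · exact hys
                    · exact hsup x (by rw [SimpleGraph.Walk.support_cons]
                                       exact List.mem_cons_of_mem _ hx)
                · simp only [SimpleGraph.Walk.length_cons] at hlen' ⊢
                  omega
              have := hmax _ this
              omega
        have had : a ≠ d := by
          rintro rfl
          exact ha_nmem (by simp [SimpleGraph.Walk.support_cons])
        -- now delete a and c
        set s' : Finset V := s \ {a, c} with hs'def
        have hacne : a ≠ c := h.ne
        have hsubs : {a, c} ⊆ s := by
          intro z hz
          rcases Finset.mem_insert.mp hz with rfl | hz
          · exact has
          · rw [Finset.mem_singleton.mp hz]; exact hcs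
        have hss' : s' ⊂ s := Finset.sdiff_ssubset hsubs ⟨a, by simp⟩
        have hcard' : s'.card = s.card - 2 := by
          rw [hs'def, Finset.card_sdiff_of_subset hsubs, Finset.card_insert_of_notMem (by simpa using hacne),
            Finset.card_singleton]
        have hs2 : 2 ≤ s.card := by
          calc 2 = ({a, c} : Finset V).card := by
                rw [Finset.card_insert_of_notMem (by simpa using hacne), Finset.card_singleton]
            _ ≤ s.card := Finset.card_le_card hsubs
        have hmem_s' : ∀ z, z ∈ s' ↔ z ∈ s ∧ z ≠ a ∧ z ≠ c := by
          intro z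
          simp [hs'def, and_assoc]
        -- degree relation on s'
        have hfilter : ∀ v ∈ s', s'.filter (G.Adj v) = (s.filter (G.Adj v)).erase c := by
          intro v hv
          obtain ⟨hvs, hva, hvc⟩ := (hmem_s' v).mp hv
          ext z
          simp only [Finset.mem_filter, Finset.mem_erase, hmem_s']
          constructor
          · rintro ⟨⟨hzs, hza, hzc⟩, hadj⟩
            exact ⟨hzc, hzs, hadj⟩
          · rintro ⟨hzc, hzs, hadj⟩
            refine ⟨⟨hzs, ?_, hzc⟩, hadj⟩
            rintro rfl
            exact hvc (hK1 v hvs hadj.symm)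
        -- K5 : new leaves are only d
        have hK5 : ∀ v ∈ s', (s'.filter (G.Adj v)).card ≤ 1 →
            2 ≤ (s.filter (G.Adj v)).card → v = d := by
          intro v hv h1 h2
          rw [hfilter v hv] at h1
          have h3 : (s.filter (G.Adj v)).card - 1 ≤ ((s.filter (G.Adj v)).erase c).card :=
            Finset.pred_card_le_card_erase
          have hcmem : c ∈ s.filter (G.Adj v) := by
            by_contra hcon
            rw [Finset.erase_eq_of_notMem hcon] at h1
            omega
          have hadjvc : G.Adj c v := (Finset.mem_filter.mp hcmem).2.symm
          have hvs : v ∈ s := ((hmem_s' v).mp hv).1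
          by_contra hvd
          have := hK3 v hvs hadjvc hvd
          omega
        -- K6 : leaf count doesn't increase
        have hK6 : (s'.filter fun v => (s'.filter (G.Adj v)).card ≤ 1).card ≤
            (s.filter fun v => (s.filter (G.Adj v)).card ≤ 1).card := by
          set F := s.filter fun v => (s.filter (G.Adj v)).card ≤ 1 with hF
          have haF : a ∈ F := by
            rw [hF, Finset.mem_filter, hK2]
            exact ⟨has, by simp⟩
          have hsubF : (s'.filter fun v => (s'.filter (G.Adj v)).card ≤ 1) ⊆
              insert d (F.erase a) := by
            intro v hv
            obtain ⟨hv1, hv2⟩ := Finset.mem_filter.mp hv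
            by_cases hd : (s.filter (G.Adj v)).card ≤ 1
            · refine Finset.mem_insert_of_mem (Finset.mem_erase.mpr ⟨((hmem_s' v).mp hv1).2.1, ?_⟩)
              exact Finset.mem_filter.mpr ⟨((hmem_s' v).mp hv1).1, hd⟩
            · exact Finset.mem_insert.mpr (Or.inl (hK5 v hv1 hv2 (by omega)))
          calc (s'.filter fun v => (s'.filter (G.Adj v)).card ≤ 1).card
              ≤ (insert d (F.erase a)).card := Finset.card_le_card hsubF
            _ ≤ (F.erase a).card + 1 := Finset.card_insert_le _ _
            _ = F.card - 1 + 1 := by rw [Finset.card_erase_of_mem haF]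
            _ = F.card := by
                have : 1 ≤ F.card := Finset.card_pos.mpr ⟨a, haF⟩
                omega
        by_cases hE : ∃ x ∈ s', ∃ y ∈ s', G.Adj x y
        · -- inductive step
          obtain ⟨M', hM', hMv', hMb'⟩ := IH s' hss' hE
          have hdisj : Disjoint M'.support (G.subgraphOfAdj h).support := by
            rw [hM'.support_eq_verts, (SimpleGraph.Subgraph.IsMatching.subgraphOfAdj h).support_eq_verts]
            rw [Set.disjoint_left]
            intro z hz hz2
            have hz3 := hMv' hz
            rw [Finset.mem_coe, hmem_s' z] at hz3
            simp only [subgraphOfAdj_verts, Set.mem_insert_iff, Set.mem_singleton_iff] at hz2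
            rcases hz2 with rfl | rfl
            · exact hz3.2.1 rfl
            · exact hz3.2.2 rfl
          refine ⟨M' ⊔ G.subgraphOfAdj h,
            hM'.sup (SimpleGraph.Subgraph.IsMatching.subgraphOfAdj h) hdisj, ?_, ?_⟩
          · rw [SimpleGraph.Subgraph.verts_sup]
            rintro z (hz | hz)
            · exact Finset.mem_coe.mpr (Finset.mem_sdiff.mp (Finset.mem_coe.mp (hMv' hz))).1
            · simp only [subgraphOfAdj_verts, Set.mem_insert_iff, Set.mem_singleton_iff] at hz
              rcases hz with rfl | rfl
              · exact has
              · exact hcs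
          · rw [SimpleGraph.Subgraph.edgeSet_sup, G.edgeSet_subgraphOfAdj h]
            have hnotmem : s(a, c) ∉ M'.edgeSet := by
              intro hcon
              rw [SimpleGraph.Subgraph.mem_edgeSet] at hcon
              have := hMv' (M'.edge_vert hcon)
              rw [Finset.mem_coe, hmem_s' a] at this
              exact this.2.1 rfl
            rw [Set.ncard_union_eq (by simpa using hnotmem) (Set.toFinite _) (Set.toFinite _)]
            rw [Set.ncard_singleton]
            have hcast : (s'.card : ℚ) = (s.card : ℚ) - 2 := by
              rw [hcard']
              push_cast [hs2]
              ring
            have hK6' : ((s'.filter fun v => (s'.filter (G.Adj v)).card ≤ 1).card : ℚ) ≤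
                ((s.filter fun v => (s.filter (G.Adj v)).card ≤ 1).card : ℚ) := by
              exact_mod_cast hK6
            rw [hcast] at hMb'
            push_cast
            linarith
        · -- no edge remains: at most one internal vertex
          push_neg at hE
          have honeint : (s.filter fun v => ¬ (s.filter (G.Adj v)).card ≤ 1) ⊆ {c} := by
            intro v hv
            obtain ⟨hvs, hvd⟩ := Finset.mem_filter.mp hv
            push_neg at hvd
            rw [Finset.mem_singleton]
            by_contra hvc
            have hva : v ≠ a := by
              rintro rfl
              rw [hK2] at hvd
              simp at hvd
            have hvs' : v ∈ s' := (hmem_s' v).mpr ⟨hvs, hva, hvc⟩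
            have hane : a ∉ s.filter (G.Adj v) := by
              intro hcon
              exact hvc (hK1 v hvs (Finset.mem_filter.mp hcon).2.symm)
            have : ((s.filter (G.Adj v)).erase c).Nonempty := by
              rw [← Finset.card_pos]
              have := Finset.pred_card_le_card_erase (s := s.filter (G.Adj v)) (a := c)
              omega
            obtain ⟨z, hz⟩ := this
            rw [Finset.mem_erase, Finset.mem_filter] at hz
            have hzc := hz.1
            have hzs := hz.2.1
            have hzadj := hz.2.2
            have hza : z ≠ a := fun hcon => hane (hcon ▸ Finset.mem_filter.mpr ⟨hzs, hzadj⟩)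
            have hzs' : z ∈ s' := (hmem_s' z).mpr ⟨hzs, hza, hzc⟩
            exact hE v hvs' z hzs' hzadj
          have hcount := Finset.card_filter_add_card_filter_not
            (s := s) (p := fun v => (s.filter (G.Adj v)).card ≤ 1)
          have hle1 : (s.filter fun v => ¬ (s.filter (G.Adj v)).card ≤ 1).card ≤ 1 := by
            calc _ ≤ ({c} : Finset V).card := Finset.card_le_card honeint
              _ = 1 := Finset.card_singleton c
          refine ⟨G.subgraphOfAdj h, SimpleGraph.Subgraph.IsMatching.subgraphOfAdj h, ?_, ?_⟩
          · simp only [subgraphOfAdj_verts]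
            intro z hz
            rcases hz with rfl | rfl
            · exact has
            · exact hcs
          · rw [G.edgeSet_subgraphOfAdj h, Set.ncard_singleton]
            have h1 : s.card ≤ (s.filter fun v => (s.filter (G.Adj v)).card ≤ 1).card + 1 := by
              omega
            have h2 : ((s.card : ℚ)) ≤
                ((s.filter fun v => (s.filter (G.Adj v)).card ≤ 1).card : ℚ) + 1 := by
              exact_mod_cast h1
            push_cast
            linarith
  · -- all degrees ≤ 1 : single edge suffices
    refine ⟨G.subgraphOfAdj hxy, SimpleGraph.Subgraph.IsMatching.subgraphOfAdj hxy, ?_, ?_⟩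
    · simp only [subgraphOfAdj_verts]
      intro z hz; rcases hz with rfl | rfl <;> simpa
    · rw [G.edgeSet_subgraphOfAdj hxy]
      rw [Set.ncard_singleton]
      have hf : s.filter (fun v => (s.filter (G.Adj v)).card ≤ 1) = s := by
        apply Finset.filter_true_of_mem
        intro v hv
        by_contra hc
        exact hint ⟨v, hv, by omega⟩
      rw [hf]
      norm_num

/-- Every tree `T` with `n ≥ 2` vertices and `f` leaves (a
leaf is a vertex of degree at most 1) has a matching of size at least
`(n - f + 1)/2`. -/
theorem tree_matching_lower_bound {V : Type*} [Fintype V] [DecidableEq V]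
    (G : SimpleGraph V) [DecidableRel G.Adj] (hT : G.IsTree)
    (hn : 2 ≤ Fintype.card V) :
    ∃ M : G.Subgraph, M.IsMatching ∧
      ((Fintype.card V : ℚ)
          - ((Finset.univ.filter fun v => G.degree v ≤ 1).card : ℚ) + 1) / 2
        ≤ (M.edgeSet.ncard : ℚ) := by
  obtain ⟨u, v, huv⟩ : ∃ u v, G.Adj u v := by
    obtain ⟨u, v, hne⟩ := Fintype.exists_pair_of_one_lt_card hn
    obtain ⟨p⟩ := hT.isConnected.preconnected u v
    cases p with
    | nil => exact absurd rfl hne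
    | cons hadj _ => exact ⟨_, _, hadj⟩
  obtain ⟨M, hM, _, hMb⟩ := helper G hT.IsAcyclic Finset.univ
    ⟨u, Finset.mem_univ u, v, Finset.mem_univ v, huv⟩
  refine ⟨M, hM, ?_⟩
  have hfeq : (Finset.univ.filter fun w => (Finset.univ.filter (G.Adj w)).card ≤ 1) =
      (Finset.univ.filter fun w => G.degree w ≤ 1) := by
    apply Finset.filter_congr
    intro w _
    rw [← SimpleGraph.neighborFinset_eq_filter]
    rfl
  rw [hfeq, Finset.card_univ] at hMb
  exact hMb
end

section
/- Let D be an odd 3-wheel with center c. Then (i) for every arc e of D, the digraph D with e removed contains, as a subdigraph, a bidirected odd cycle with one arc removed; and (ii) for every vertex v of D other than c, the digraph D − v contains, as a subdigraph, a bidirected odd cycle with one arc removed. -/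
namespace Wheel
variable {V : Type*} [DecidableEq V]
set_option linter.unusedSectionVars false

def consec : List V → List (V × V)
  | [] => []
  | [_] => []
  | a :: b :: t => (a, b) :: consec (b :: t)

lemma zip_tail_eq_consec : ∀ p : List V, p.zip p.tail = consec p
  | [] => rfl
  | [_] => rfl
  | a :: b :: t => by
      show (a :: b :: t).zip (b :: t) = (a, b) :: consec (b :: t)
      rw [List.zip_cons_cons, ← zip_tail_eq_consec (b :: t)]
      rfl

lemma mem_of_mem_consec : ∀ {p : List V} {u v : V}, (u, v) ∈ consec p → u ∈ p ∧ v ∈ p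
  | a :: b :: t, u, v, h => by
      rcases List.mem_cons.1 h with h | h
      · obtain ⟨rfl, rfl⟩ := Prod.mk.injEq .. ▸ Prod.ext_iff.1 h
        exact ⟨List.mem_cons_self .., List.mem_cons_of_mem _ (List.mem_cons_self ..)⟩
      · obtain ⟨h1, h2⟩ := mem_of_mem_consec h
        exact ⟨List.mem_cons_of_mem _ h1, List.mem_cons_of_mem _ h2⟩

lemma ne_of_mem_consec : ∀ {p : List V}, p.Nodup → ∀ {u v : V}, (u, v) ∈ consec p → u ≠ v
  | a :: b :: t, hn, u, v, h => by
      rcases List.mem_cons.1 h with h | h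
      · obtain ⟨rfl, rfl⟩ := Prod.ext_iff.1 h
        exact fun hEq => (List.nodup_cons.1 hn).1 (hEq ▸ List.mem_cons_self ..)
      · exact ne_of_mem_consec (List.nodup_cons.1 hn).2 h

lemma consec_append : ∀ (p : List V) {a : V} (q : List V) {b : V},
    p.getLast? = some a → q.head? = some b →
    consec (p ++ q) = consec p ++ (a, b) :: consec q
  | [], _, q, _, ha, _ => by simp at ha
  | [x], a, q, b, ha, hb => by
      obtain ⟨c, t, rfl⟩ : ∃ c t, q = c :: t := by
        cases q with
        | nil => simp at hb
        | cons c t => exact ⟨c, t, rfl⟩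
      simp only [List.getLast?_singleton, Option.some.injEq] at ha
      simp only [List.head?_cons, Option.some.injEq] at hb
      subst ha hb
      rfl
  | x :: y :: t, a, q, b, ha, hb => by
      rw [List.getLast?_cons_cons] at ha
      show (x, y) :: consec ((y :: t) ++ q) = ((x, y) :: consec (y :: t)) ++ (a, b) :: consec q
      rw [consec_append (y :: t) q ha hb]
      rfl

lemma consec_reverse : ∀ p : List V, consec p.reverse = (consec p).reverse.map Prod.swap
  | [] => rfl
  | [_] => rfl
  | a :: b :: t => by
      have h1 : (b :: t).reverse.getLast? = some b := by
        rw [List.getLast?_reverse]; rfl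
      rw [List.reverse_cons, consec_append _ [a] h1 rfl, consec_reverse (b :: t),
        show consec (a :: b :: t) = (a, b) :: consec (b :: t) from rfl,
        List.reverse_cons, List.map_append]
      rfl

lemma zip_tail_concat : ∀ (p : List V) {d : V} (a : V), p.getLast? = some d →
    p.zip (p.tail ++ [a]) = consec p ++ [(d, a)]
  | [], _, a, hd => by simp at hd
  | [x], d, a, hd => by
      simp only [List.getLast?_singleton, Option.some.injEq] at hd
      subst hd; rfl
  | x :: y :: t, d, a, hd => by
      rw [List.getLast?_cons_cons] at hd
      show (x, y) :: (y :: t).zip (t ++ [a]) = ((x, y) :: consec (y :: t)) ++ [(d, a)]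
      rw [show (y :: t).zip (t ++ [a]) = (y :: t).zip ((y :: t).tail ++ [a]) from rfl,
        zip_tail_concat (y :: t) a hd]
      rfl

lemma zip_rotate {p : List V} {a d : V} (ha : p.head? = some a) (hd : p.getLast? = some d) :
    p.zip (p.rotate 1) = consec p ++ [(d, a)] := by
  cases p with
  | nil => simp at ha
  | cons x t =>
      simp only [List.head?_cons, Option.some.injEq] at ha
      subst ha
      rw [List.rotate_cons_succ, List.rotate_zero]
      exact zip_tail_concat (x :: t) x hd

lemma head_ne_getLast : ∀ {L : List V}, L.Nodup → ∀ {hd la : V}, L.head? = some hd →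
    L.getLast? = some la → 2 ≤ L.length → hd ≠ la
  | a :: b :: u, hn, hd, la, h1, h2, _ => by
      simp only [List.head?_cons, Option.some.injEq] at h1
      rw [List.getLast?_cons_cons] at h2
      subst h1
      have : la ∈ b :: u := List.mem_of_mem_getLast? (h2 ▸ rfl : la ∈ (b :: u).getLast?)
      exact fun hEq => (List.nodup_cons.1 hn).1 (hEq ▸ this)
  | [_], _, _, _, _, _, hlen => by simp at hlen

end Wheel

namespace Digraph'
section Aux
variable {V : Type*} [DecidableEq V]
set_option linter.unusedSectionVars false

lemma mem_symArcs {s : Finset (V × V)} {e : V × V} :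
    e ∈ symArcs s ↔ e ∈ s ∨ e.swap ∈ s := by
  unfold symArcs
  rw [Finset.mem_union, Finset.mem_image]
  constructor
  · rintro (h | ⟨x, hx, rfl⟩)
    · exact Or.inl h
    · exact Or.inr (by simpa using hx)
  · rintro (h | h)
    · exact Or.inl h
    · exact Or.inr ⟨e.swap, h, Prod.swap_swap e⟩

lemma pathArcs_eq (p : List V) : pathArcs p = (Wheel.consec p).toFinset := by
  unfold pathArcs
  rw [Wheel.zip_tail_eq_consec]

lemma mem_pathDigonArcs {p : List V} {e : V × V} :
    e ∈ pathDigonArcs p ↔ e ∈ Wheel.consec p ∨ e.swap ∈ Wheel.consec p := by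
  unfold pathDigonArcs
  rw [mem_symArcs, pathArcs_eq]
  simp

lemma ends_of_pathDigonArcs {p : List V} {u v : V} (h : (u, v) ∈ pathDigonArcs p) :
    u ∈ p.toFinset ∧ v ∈ p.toFinset := by
  rcases mem_pathDigonArcs.1 h with h | h
  · obtain ⟨h1, h2⟩ := Wheel.mem_of_mem_consec h
    exact ⟨List.mem_toFinset.2 h1, List.mem_toFinset.2 h2⟩
  · obtain ⟨h1, h2⟩ := Wheel.mem_of_mem_consec h
    exact ⟨List.mem_toFinset.2 h2, List.mem_toFinset.2 h1⟩

lemma mem_map_swap {l : List (V × V)} {e : V × V} :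
    e ∈ l.map Prod.swap ↔ e.swap ∈ l := by
  simp [List.mem_map, Prod.swap_eq_iff_eq_swap]

lemma exists_cycle_piece {p q : List V} {w a b : V}
    (hp : IsOddBidirPathList p w a) (hq : IsOddBidirPathList q w b)
    (hpq : p.toFinset ∩ q.toFinset = {w}) :
    ∃ H : Digraph' V, H.IsBidirOddCycleMinusArc ∧
      H.verts = p.toFinset ∪ q.toFinset ∧
      H.arcs = pathDigonArcs p ∪ pathDigonArcs q ∪ {(a, b)} := by
  obtain ⟨hpn, hpe, hph, hpl⟩ := hp
  obtain ⟨hqn, hqe, hqh, hql⟩ := hq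
  -- basic facts
  have hwp : w ∈ p := List.mem_of_mem_head? (hph ▸ rfl : w ∈ p.head?)
  have hap : a ∈ p := List.mem_of_mem_getLast? (hpl ▸ rfl : a ∈ p.getLast?)
  have hbq : b ∈ q := List.mem_of_mem_getLast? (hql ▸ rfl : b ∈ q.getLast?)
  have hp2 : 2 ≤ p.length := by
    obtain ⟨k, hk⟩ := hpe
    have : p ≠ [] := by rintro rfl; simp at hph
    have : p.length ≠ 0 := by simpa using this
    omega
  have hq2 : 2 ≤ q.length := by
    obtain ⟨k, hk⟩ := hqe
    have : q ≠ [] := by rintro rfl; simp at hqh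
    have : q.length ≠ 0 := by simpa using this
    omega
  have haw : a ≠ w := (Wheel.head_ne_getLast hpn hph hpl hp2).symm
  have hbw : b ≠ w := (Wheel.head_ne_getLast hqn hqh hql hq2).symm
  have hmemw : ∀ v : V, v ∈ p → v ∈ q → v = w := by
    intro v h1 h2
    have : v ∈ p.toFinset ∩ q.toFinset :=
      Finset.mem_inter.2 ⟨List.mem_toFinset.2 h1, List.mem_toFinset.2 h2⟩
    rw [hpq, Finset.mem_singleton] at this
    exact this
  have hab : a ≠ b := fun hEq => haw (hmemw a hap (hEq ▸ hbq))
  -- decompose q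
  obtain ⟨h, t', rfl⟩ : ∃ h t', q = w :: h :: t' := by
    cases q with
    | nil => simp at hqh
    | cons c t =>
        simp only [List.head?_cons, Option.some.injEq] at hqh
        cases t with
        | nil => simp at hq2
        | cons h t' => exact ⟨h, t', by rw [hqh]⟩
  have hql' : (h :: t').getLast? = some b := by rw [← List.getLast?_cons_cons (a := w)]; exact hql
  set L : List V := p ++ (h :: t').reverse with hL
  have hLhead : L.head? = some w := by
    rw [hL]
    cases p with
    | nil => simp at hph
    | cons x s => simpa using hph
  have hLlast : L.getLast? = some h := by
    rw [hL, List.getLast?_append_of_ne_nil _ (by simp), List.getLast?_reverse]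
    rfl
  have hconsecL : Wheel.consec L =
      Wheel.consec p ++ (a, b) :: ((Wheel.consec (h :: t')).reverse.map Prod.swap) := by
    rw [hL, Wheel.consec_append p _ hpl (by rw [List.head?_reverse]; exact hql'),
      Wheel.consec_reverse]
  have hzip : L.zip (L.rotate 1) = Wheel.consec L ++ [(h, w)] := Wheel.zip_rotate hLhead hLlast
  have hwnotq : w ∉ h :: t' := (List.nodup_cons.1 hqn).1
  -- the membership characterization of the cycle arcs
  have harcs_mem : ∀ e : V × V, e ∈ symArcs (cyclicArcs L) ↔
      e ∈ pathDigonArcs p ∨ e ∈ pathDigonArcs (w :: h :: t') ∨ e = (a, b) ∨ e = (b, a) := by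
    intro e
    rw [mem_symArcs]
    unfold cyclicArcs
    rw [hzip, hconsecL]
    have hcq : Wheel.consec (w :: h :: t') = (w, h) :: Wheel.consec (h :: t') := rfl
    simp only [List.mem_toFinset, List.mem_append, List.mem_cons, mem_map_swap,
      List.mem_reverse, List.mem_singleton, List.not_mem_nil, or_false,
      mem_pathDigonArcs, hcq, Prod.swap_swap, Prod.swap_eq_iff_eq_swap, Prod.swap_prod_mk]
    tauto
  have hverts : L.toFinset = p.toFinset ∪ (w :: h :: t').toFinset := by
    ext v
    simp only [hL, List.toFinset_append, List.toFinset_reverse, Finset.mem_union,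
      List.mem_toFinset, List.mem_cons]
    constructor
    · rintro (h1 | h1)
      · tauto
      · tauto
    · rintro (h1 | h1 | h1)
      · tauto
      · subst h1; tauto
      · tauto
  -- well-formedness
  have hwf : ∀ e ∈ symArcs (cyclicArcs L), e.1 ∈ L.toFinset ∧ e.2 ∈ L.toFinset ∧ e.1 ≠ e.2 := by
    intro e he
    rw [harcs_mem] at he
    rw [hverts]
    obtain ⟨u, v⟩ := e
    rcases he with h1 | h1 | h1 | h1
    · obtain ⟨h2, h3⟩ := ends_of_pathDigonArcs h1
      refine ⟨Finset.mem_union_left _ h2, Finset.mem_union_left _ h3, ?_⟩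
      rcases mem_pathDigonArcs.1 h1 with h4 | h4
      · exact Wheel.ne_of_mem_consec hpn h4
      · exact (Wheel.ne_of_mem_consec hpn h4).symm
    · obtain ⟨h2, h3⟩ := ends_of_pathDigonArcs h1
      refine ⟨Finset.mem_union_right _ h2, Finset.mem_union_right _ h3, ?_⟩
      rcases mem_pathDigonArcs.1 h1 with h4 | h4
      · exact Wheel.ne_of_mem_consec hqn h4
      · exact (Wheel.ne_of_mem_consec hqn h4).symm
    · obtain ⟨rfl, rfl⟩ := Prod.ext_iff.1 h1
      exact ⟨Finset.mem_union_left _ (List.mem_toFinset.2 hap),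
        Finset.mem_union_right _ (List.mem_toFinset.2 hbq), hab⟩
    · obtain ⟨rfl, rfl⟩ := Prod.ext_iff.1 h1
      exact ⟨Finset.mem_union_right _ (List.mem_toFinset.2 hbq),
        Finset.mem_union_left _ (List.mem_toFinset.2 hap), hab.symm⟩
  set C : Digraph' V := ⟨L.toFinset, symArcs (cyclicArcs L), hwf⟩ with hC
  have hLnodup : L.Nodup := by
    rw [hL, List.nodup_append]
    refine ⟨hpn, List.nodup_reverse.2 (List.nodup_cons.1 hqn).2, ?_⟩
    intro v hv1 u hv2 hvu
    subst hvu
    have hv2' : v ∈ h :: t' := List.mem_reverse.1 hv2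
    have := hmemw v hv1 (List.mem_cons_of_mem _ hv2')
    subst this
    exact hwnotq hv2'
  have hLlen : L.length = p.length + (t'.length + 1) := by simp [hL]
  have hcyc : C.IsBidirectedOddCycle := by
    refine ⟨L, hLnodup, ?_, ?_, rfl, rfl⟩
    · rw [hLlen]; omega
    · obtain ⟨k, hk⟩ := hpe
      obtain ⟨m, hm⟩ := hqe
      have : (w :: h :: t').length = t'.length + 2 := by simp
      rw [hLlen]
      exact ⟨k + (t'.length + 1) / 2, by omega⟩
  have hba_mem : (b, a) ∈ C.arcs := (harcs_mem (b, a)).2 (Or.inr (Or.inr (Or.inr rfl)))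
  have hba_notp : (b, a) ∉ pathDigonArcs p := by
    intro hmem
    exact hbw (hmemw b (List.mem_toFinset.1 (ends_of_pathDigonArcs hmem).1) hbq)
  have hba_notq : (b, a) ∉ pathDigonArcs (w :: h :: t') := by
    intro hmem
    exact haw (hmemw a hap (List.mem_toFinset.1 (ends_of_pathDigonArcs hmem).2))
  refine ⟨C.eraseArc (b, a), ⟨C, (b, a), hcyc, hba_mem, rfl, rfl⟩, hverts, ?_⟩
  show C.arcs.erase (b, a) = _
  ext e
  rw [Finset.mem_erase]
  show _ ∧ e ∈ symArcs (cyclicArcs L) ↔ _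
  rw [harcs_mem]
  simp only [Finset.mem_union, Finset.mem_singleton]
  constructor
  · rintro ⟨hne, h1 | h1 | h1 | h1⟩
    · tauto
    · tauto
    · tauto
    · exact absurd h1 hne
  · rintro ((h1 | h1) | h1)
    · exact ⟨fun hEq => hba_notp (hEq ▸ h1), Or.inl h1⟩
    · exact ⟨fun hEq => hba_notq (hEq ▸ h1), Or.inr (Or.inl h1)⟩
    · subst h1
      refine ⟨?_, Or.inr (Or.inr (Or.inl rfl))⟩
      intro hEq
      rw [Prod.mk.injEq] at hEq
      exact hab hEq.1

end Aux
end Digraph'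

namespace Digraph'
section Aux2
variable {V : Type*} [DecidableEq V]
set_option linter.unusedSectionVars false

lemma odd_path_facts {p : List V} {w a : V} (hp : IsOddBidirPathList p w a) :
    w ∈ p.toFinset ∧ a ∈ p.toFinset ∧ a ≠ w := by
  obtain ⟨hpn, hpe, hph, hpl⟩ := hp
  have hp2 : 2 ≤ p.length := by
    obtain ⟨k, hk⟩ := hpe
    have : p ≠ [] := by rintro rfl; simp at hph
    have : p.length ≠ 0 := by simpa using this
    omega
  exact ⟨List.mem_toFinset.2 (List.mem_of_mem_head? (hph ▸ rfl : w ∈ p.head?)),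
    List.mem_toFinset.2 (List.mem_of_mem_getLast? (hpl ▸ rfl : a ∈ p.getLast?)),
    (Wheel.head_ne_getLast hpn hph hpl hp2).symm⟩

lemma isSubdigraph_eraseArc_of {H D : Digraph' V} {e : V × V}
    (h : H.IsSubdigraph D) (he : e ∉ H.arcs) : H.IsSubdigraph (D.eraseArc e) :=
  ⟨h.1, fun f hf => Finset.mem_erase.2 ⟨fun hEq => he (hEq ▸ hf), h.2 hf⟩⟩

lemma isSubdigraph_delVert_of {H D : Digraph' V} {v : V}
    (h : H.IsSubdigraph D) (hv : v ∉ H.verts) : H.IsSubdigraph (D.delVert v) := by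
  refine ⟨fun u hu => Finset.mem_erase.2 ⟨fun hEq => hv (hEq ▸ hu), h.1 hu⟩, ?_⟩
  intro f hf
  obtain ⟨h1, h2, _⟩ := H.wf f hf
  exact Finset.mem_filter.2 ⟨h.2 hf, fun hEq => hv (hEq ▸ h1), fun hEq => hv (hEq ▸ h2)⟩

end Aux2
end Digraph'

open Digraph' in
/-- Let `D` be an odd 3-wheel with center `c`. Then (i) for
every arc `e` of `D`, the digraph `D` minus `e` contains, as a subdigraph, a
bidirected odd cycle with one arc removed; and (ii) for every vertex `v ≠ c`,
the digraph `D - v` contains, as a subdigraph, a bidirected odd cycle with one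
arc removed. -/
theorem odd3Wheel_contains_cycle_minus_arc {V : Type*} [DecidableEq V]
    (D : Digraph' V) (c : V) (hwheel : D.IsOdd3WheelWithCenter c) :
    (∀ e ∈ D.arcs, ∃ H : Digraph' V,
      H.IsSubdigraph (D.eraseArc e) ∧ H.IsBidirOddCycleMinusArc) ∧
    (∀ v ∈ D.verts, v ≠ c → ∃ H : Digraph' V,
      H.IsSubdigraph (D.delVert v) ∧ H.IsBidirOddCycleMinusArc) := by
  obtain ⟨p₁, p₂, p₃, x, y, z, hp₁, hp₂, hp₃, h12, h13, h23, hverts, harcs⟩ := hwheel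
  have h21 : p₂.toFinset ∩ p₁.toFinset = {c} := by rw [Finset.inter_comm]; exact h12
  have h31 : p₃.toFinset ∩ p₁.toFinset = {c} := by rw [Finset.inter_comm]; exact h13
  have h32 : p₃.toFinset ∩ p₂.toFinset = {c} := by rw [Finset.inter_comm]; exact h23
  obtain ⟨H₁₂, hc12, hv12, ha12⟩ := exists_cycle_piece hp₁ hp₂ h12
  obtain ⟨H₂₃, hc23, hv23, ha23⟩ := exists_cycle_piece hp₂ hp₃ h23
  obtain ⟨H₃₁, hc31, hv31, ha31⟩ := exists_cycle_piece hp₃ hp₁ h31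
  obtain ⟨hc1, hx1, hxc⟩ := odd_path_facts hp₁
  obtain ⟨hc2, hy2, hyc⟩ := odd_path_facts hp₂
  obtain ⟨hc3, hz3, hzc⟩ := odd_path_facts hp₃
  have honly : ∀ {s t : Finset V}, s ∩ t = {c} → ∀ {v : V}, v ∈ s → v ∈ t → v = c := by
    intro s t hst v hv1 hv2
    exact Finset.mem_singleton.1 (hst ▸ Finset.mem_inter.2 ⟨hv1, hv2⟩)
  have hx2 : x ∉ p₂.toFinset := fun hm => hxc (honly h12 hx1 hm)
  have hx3 : x ∉ p₃.toFinset := fun hm => hxc (honly h13 hx1 hm)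
  have hy1 : y ∉ p₁.toFinset := fun hm => hyc (honly h21 hy2 hm)
  have hy3 : y ∉ p₃.toFinset := fun hm => hyc (honly h23 hy2 hm)
  have hz1 : z ∉ p₁.toFinset := fun hm => hzc (honly h31 hz3 hm)
  have hz2 : z ∉ p₂.toFinset := fun hm => hzc (honly h32 hz3 hm)
  -- the three subgraphs of D
  have hsub12 : H₁₂.IsSubdigraph D := by
    constructor
    · rw [hv12, hverts]; exact Finset.subset_union_left
    · rw [ha12, harcs]
      intro f hf
      simp only [Finset.mem_union, Finset.mem_insert, Finset.mem_singleton] at hf ⊢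
      tauto
  have hsub23 : H₂₃.IsSubdigraph D := by
    constructor
    · rw [hv23, hverts]
      intro u hu
      simp only [Finset.mem_union] at hu ⊢
      tauto
    · rw [ha23, harcs]
      intro f hf
      simp only [Finset.mem_union, Finset.mem_insert, Finset.mem_singleton] at hf ⊢
      tauto
  have hsub31 : H₃₁.IsSubdigraph D := by
    constructor
    · rw [hv31, hverts]
      intro u hu
      simp only [Finset.mem_union] at hu ⊢
      tauto
    · rw [ha31, harcs]
      intro f hf
      simp only [Finset.mem_union, Finset.mem_insert, Finset.mem_singleton] at hf ⊢
      tauto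
  have hdisj : ∀ {P Q : List V}, P.toFinset ∩ Q.toFinset = {c} → ∀ {f : V × V},
      f.1 ≠ f.2 → f ∈ pathDigonArcs P → f ∉ pathDigonArcs Q := by
    rintro P Q hPQ ⟨u, v⟩ hne h1 h2
    obtain ⟨hP1, hP2⟩ := ends_of_pathDigonArcs h1
    obtain ⟨hQ1, hQ2⟩ := ends_of_pathDigonArcs h2
    exact hne ((honly hPQ hP1 hQ1).trans (honly hPQ hP2 hQ2).symm)
  constructor
  · -- part (i)
    intro e he
    have hwfe := (D.wf e he).2.2
    rw [harcs] at he
    simp only [Finset.mem_union, Finset.mem_insert, Finset.mem_singleton] at he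
    rcases he with ((he1 | he1) | he1) | he1 | he1 | he1
    · refine ⟨H₂₃, isSubdigraph_eraseArc_of hsub23 ?_, hc23⟩
      rw [ha23]
      intro hf
      simp only [Finset.mem_union, Finset.mem_singleton] at hf
      rcases hf with (hf | hf) | hf
      · exact hdisj h12 hwfe he1 hf
      · exact hdisj h13 hwfe he1 hf
      · subst hf; exact hy1 (ends_of_pathDigonArcs he1).1
    · refine ⟨H₃₁, isSubdigraph_eraseArc_of hsub31 ?_, hc31⟩
      rw [ha31]
      intro hf
      simp only [Finset.mem_union, Finset.mem_singleton] at hf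
      rcases hf with (hf | hf) | hf
      · exact hdisj h23 hwfe he1 hf
      · exact hdisj h21 hwfe he1 hf
      · subst hf; exact hz2 (ends_of_pathDigonArcs he1).1
    · refine ⟨H₁₂, isSubdigraph_eraseArc_of hsub12 ?_, hc12⟩
      rw [ha12]
      intro hf
      simp only [Finset.mem_union, Finset.mem_singleton] at hf
      rcases hf with (hf | hf) | hf
      · exact hdisj h31 hwfe he1 hf
      · exact hdisj h32 hwfe he1 hf
      · subst hf; exact hx3 (ends_of_pathDigonArcs he1).1
    · subst he1
      refine ⟨H₂₃, isSubdigraph_eraseArc_of hsub23 ?_, hc23⟩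
      rw [ha23]
      intro hf
      simp only [Finset.mem_union, Finset.mem_singleton] at hf
      rcases hf with (hf | hf) | hf
      · exact hx2 (ends_of_pathDigonArcs hf).1
      · exact hy3 (ends_of_pathDigonArcs hf).2
      · rw [Prod.mk.injEq] at hf
        exact hx2 (hf.1 ▸ hy2)
    · subst he1
      refine ⟨H₃₁, isSubdigraph_eraseArc_of hsub31 ?_, hc31⟩
      rw [ha31]
      intro hf
      simp only [Finset.mem_union, Finset.mem_singleton] at hf
      rcases hf with (hf | hf) | hf
      · exact hy3 (ends_of_pathDigonArcs hf).1
      · exact hz1 (ends_of_pathDigonArcs hf).2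
      · rw [Prod.mk.injEq] at hf
        exact hy3 (hf.1 ▸ hz3)
    · subst he1
      refine ⟨H₁₂, isSubdigraph_eraseArc_of hsub12 ?_, hc12⟩
      rw [ha12]
      intro hf
      simp only [Finset.mem_union, Finset.mem_singleton] at hf
      rcases hf with (hf | hf) | hf
      · exact hz1 (ends_of_pathDigonArcs hf).1
      · exact hx2 (ends_of_pathDigonArcs hf).2
      · rw [Prod.mk.injEq] at hf
        exact hz1 (hf.1 ▸ hx1)
  · -- part (ii)
    intro v hv hvc
    rw [hverts] at hv
    simp only [Finset.mem_union] at hv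
    rcases hv with (hv | hv) | hv
    · refine ⟨H₂₃, isSubdigraph_delVert_of hsub23 ?_, hc23⟩
      rw [hv23]
      intro hm
      rcases Finset.mem_union.1 hm with hm | hm
      · exact hvc (honly h12 hv hm)
      · exact hvc (honly h13 hv hm)
    · refine ⟨H₃₁, isSubdigraph_delVert_of hsub31 ?_, hc31⟩
      rw [hv31]
      intro hm
      rcases Finset.mem_union.1 hm with hm | hm
      · exact hvc (honly h23 hv hm)
      · exact hvc (honly h21 hv hm)
    · refine ⟨H₁₂, isSubdigraph_delVert_of hsub12 ?_, hc12⟩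
      rw [hv12]
      intro hm
      rcases Finset.mem_union.1 hm with hm | hm
      · exact hvc (honly h31 hv hm)
      · exact hvc (honly h32 hv hm)
end
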